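/- Let ρ_{KE} = Σ_{k∈{0,1}} Σ_{a∈{0,1}^n} |k⟩⟨k| δ^k_{g(a)} tr_A[ρ_{AE} ∏_i A_i(a_i)] where g is the parity function, each {A_i(0), A_i(1)} is a binary projective measurement on factor A_i with C_i = A_i(0) − A_i(1), and ρ_{AE} is a state on A ⊗ E with A = ⊗_i A_i. Then ‖ρ_{KE} − u_K ⊗ ρ_E‖₁ = ‖tr_A(ρ_{AE} ∏_i C_i)‖₁, where u_K = (|0⟩⟨0| + |1⟩⟨1|)/2 and ρ_E = tr_A ρ_{AE}. -/

import Mathlib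

open Matrix ComplexOrder

/-- The square root of a positive semidefinite matrix (the definition `Matrix.PosSemidef.sqrt`
of the older Mathlib, which has since been removed). -/
noncomputable def Matrix.PosSemidef.sqrt {n 𝕜 : Type*} [Fintype n] [DecidableEq n] [RCLike 𝕜]
    {A : Matrix n n 𝕜} (hA : A.PosSemidef) : Matrix n n 𝕜 :=
  (hA.1.eigenvectorUnitary : Matrix n n 𝕜) * diagonal ((↑) ∘ Real.sqrt ∘ hA.1.eigenvalues) *
    (star hA.1.eigenvectorUnitary : Matrix n n 𝕜)

open scoped MatrixOrder in
lemma Matrix.PosSemidef.sqrt_eq_cfc {n : Type*} [Fintype n] [DecidableEq n]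
    {A : Matrix n n ℂ} (hA : A.PosSemidef) : hA.sqrt = CFC.sqrt A := by
  rw [CFC.sqrt_eq_real_sqrt A hA.nonneg, cfcₙ_eq_cfc, hA.1.cfc_eq, IsHermitian.cfc,
    Unitary.conjStarAlgAut_apply]
  rfl

open scoped MatrixOrder in
lemma Matrix.PosSemidef.posSemidef_sqrt {n : Type*} [Fintype n] [DecidableEq n]
    {A : Matrix n n ℂ} (hA : A.PosSemidef) : hA.sqrt.PosSemidef := by
  rw [hA.sqrt_eq_cfc]
  exact (CFC.sqrt_nonneg A).posSemidef

open scoped MatrixOrder in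
lemma Matrix.PosSemidef.sqrt_mul_self {n : Type*} [Fintype n] [DecidableEq n]
    {A : Matrix n n ℂ} (hA : A.PosSemidef) : hA.sqrt * hA.sqrt = A := by
  rw [hA.sqrt_eq_cfc]
  exact CFC.sqrt_mul_sqrt_self A hA.nonneg

open scoped MatrixOrder in
lemma Matrix.PosSemidef.eq_sqrt_of_sq_eq {n : Type*} [Fintype n] [DecidableEq n]
    {A B : Matrix n n ℂ} (hA : A.PosSemidef) (hB : B.PosSemidef) (h : A ^ 2 = B) :
    A = hB.sqrt := by
  rw [hB.sqrt_eq_cfc]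
  exact (CFC.sqrt_unique (by rw [← h, pow_two]) hA.nonneg).symm

/-- The trace norm `‖X‖₁ = tr √(Xᴴ X)` of a matrix. -/
noncomputable def traceNorm {n : Type*} [Fintype n] [DecidableEq n] (X : Matrix n n ℂ) : ℝ :=
  ((Matrix.posSemidef_conjTranspose_mul_self X).sqrt.trace).re

/-- Partial trace over the first tensor factor. -/
noncomputable def ptraceLeft {α β : Type*} [Fintype α]
    (M : Matrix (α × β) (α × β) ℂ) : Matrix β β ℂ :=
  Matrix.of fun b b' => ∑ a, M (a, b) (a, b')

noncomputable def χ (k : Fin 2) : ℂ := if k = 0 then 1 else -1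

lemma chi_add (m k : Fin 2) : χ (m + k) = χ m * χ k := by
  fin_cases m <;> fin_cases k <;> simp [χ]

lemma chi_sum {ι : Type*} (s : Finset ι) (a : ι → Fin 2) :
    χ (∑ i ∈ s, a i) = ∏ i ∈ s, χ (a i) := by
  classical
  induction s using Finset.induction with
  | empty => simp [χ]
  | insert _ _ h ih => rw [Finset.sum_insert h, Finset.prod_insert h, chi_add, ih]

lemma ite_eq_chi (k m : Fin 2) : (if m = k then (1:ℂ) else 0) = 2⁻¹ + χ k * χ m * 2⁻¹ := by
  fin_cases m <;> fin_cases k <;> norm_num [χ]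

lemma key_sum {n : ℕ} (k : Fin 2) (f : Fin n → Fin 2 → ℂ) :
    ∑ a : Fin n → Fin 2, (if (∑ i, a i) = k then (1:ℂ) else 0) * ∏ i, f i (a i)
      = 2⁻¹ * ∏ i, (f i 0 + f i 1) + χ k * 2⁻¹ * ∏ i, (f i 0 - f i 1) := by
  have h1 : ∑ a : Fin n → Fin 2, ∏ i, f i (a i) = ∏ i, (f i 0 + f i 1) := by
    calc ∑ a : Fin n → Fin 2, ∏ i, f i (a i)
        = ∑ a ∈ Fintype.piFinset (fun _ : Fin n => (Finset.univ : Finset (Fin 2))),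
            ∏ i, f i (a i) := by rw [Fintype.piFinset_univ]
      _ = ∏ i, ∑ j : Fin 2, f i j := (Finset.prod_univ_sum (fun _ : Fin n => (Finset.univ : Finset (Fin 2))) f).symm
      _ = ∏ i, (f i 0 + f i 1) := by simp [Fin.sum_univ_two]
  have h2 : ∑ a : Fin n → Fin 2, χ (∑ i, a i) * ∏ i, f i (a i) = ∏ i, (f i 0 - f i 1) := by
    have : ∀ i : Fin n, f i 0 - f i 1 = ∑ j : Fin 2, χ j * f i j := by
      intro i; simp [Fin.sum_univ_two, χ, sub_eq_add_neg]
    calc ∑ a : Fin n → Fin 2, χ (∑ i, a i) * ∏ i, f i (a i)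
        = ∑ a ∈ Fintype.piFinset (fun _ : Fin n => (Finset.univ : Finset (Fin 2))),
            ∏ i, χ (a i) * f i (a i) := by
          rw [Fintype.piFinset_univ]
          refine Finset.sum_congr rfl fun a _ => ?_
          rw [chi_sum, ← Finset.prod_mul_distrib]
      _ = ∏ i, ∑ j : Fin 2, χ j * f i j := (Finset.prod_univ_sum (fun _ : Fin n => (Finset.univ : Finset (Fin 2))) (fun i j => χ j * f i j)).symm
      _ = ∏ i, (f i 0 - f i 1) := by
          refine Finset.prod_congr rfl fun i _ => (this i).symm
  calc ∑ a : Fin n → Fin 2, (if (∑ i, a i) = k then (1:ℂ) else 0) * ∏ i, f i (a i)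
      = ∑ a : Fin n → Fin 2, (2⁻¹ * ∏ i, f i (a i)
          + χ k * 2⁻¹ * (χ (∑ i, a i) * ∏ i, f i (a i))) := by
        refine Finset.sum_congr rfl fun a _ => ?_
        rw [ite_eq_chi]; ring
    _ = _ := by
      rw [Finset.sum_add_distrib, ← Finset.mul_sum, ← Finset.mul_sum, h1, h2]

lemma traceNorm_double {dE : ℕ} (T : Matrix (Fin dE) (Fin dE) ℂ)
    (D : Matrix (Fin 2 × Fin dE) (Fin 2 × Fin dE) ℂ)
    (hD : ∀ p q : Fin 2 × Fin dE, D p q =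
      (if p.1 = q.1 then χ p.1 * 2⁻¹ else 0) * T p.2 q.2) :
    traceNorm D = traceNorm T := by
  have hT := Matrix.posSemidef_conjTranspose_mul_self T
  set R := hT.sqrt with hRdef
  have hR : R.PosSemidef := hT.posSemidef_sqrt
  set S : Matrix (Fin 2 × Fin dE) (Fin 2 × Fin dE) ℂ :=
    Matrix.of fun p q => (if p.1 = q.1 then (2:ℂ)⁻¹ else 0) * R p.2 q.2 with hSdef
  have hhalf : (0:ℂ) ≤ 2⁻¹ := by
    rw [Complex.le_def]; norm_num
  have hS : S.PosSemidef := by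
    refine posSemidef_iff_dotProduct_mulVec.mpr ⟨?_, ?_⟩
    · ext p q
      rw [conjTranspose_apply]
      rcases eq_or_ne p.1 q.1 with h | h
      · simp only [hSdef, Matrix.of_apply, if_pos h, if_pos h.symm, star_mul']
        rw [hR.1.apply]
        simp [mul_comm, Complex.star_def, map_inv₀, Complex.conj_ofNat]
      · simp [hSdef, h, Ne.symm h]
    · intro x
      have key : star x ⬝ᵥ S *ᵥ x
          = ∑ k : Fin 2, 2⁻¹ * (star (fun b => x (k, b)) ⬝ᵥ R *ᵥ (fun b => x (k, b))) := by
        simp only [dotProduct, mulVec, Pi.star_apply, hSdef, Matrix.of_apply,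
          Fintype.sum_prod_type, ite_mul, zero_mul, mul_ite, mul_zero, Finset.mul_sum]
        refine Finset.sum_congr rfl fun k _ => Finset.sum_congr rfl fun b _ => ?_
        rw [Finset.sum_comm]
        simp only [Finset.sum_ite_eq, Finset.mem_univ, if_true]
        refine Finset.sum_congr rfl fun b' _ => ?_
        ring
      rw [key]
      exact Finset.sum_nonneg fun k _ => mul_nonneg hhalf (hR.dotProduct_mulVec_nonneg _)
  have hchi : ∀ k : Fin 2, star (χ k) * χ k = 1 := by
    intro k; fin_cases k <;> simp [χ]
  have hRR : ∀ b b', (∑ c, R b c * R c b') = ∑ c, star (T c b) * T c b' := by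
    intro b b'
    have h2 : (R * R) b b' = (Tᴴ * T) b b' := by rw [hT.sqrt_mul_self]
    simpa [Matrix.mul_apply, conjTranspose_apply] using h2
  have hsq : S ^ 2 = Dᴴ * D := by
    ext ⟨k, b⟩ ⟨k', b'⟩
    rw [pow_two]
    simp only [Matrix.mul_apply, conjTranspose_apply, hD, hSdef, Matrix.of_apply,
      Fintype.sum_prod_type, star_mul', apply_ite (starRingEnd ℂ), map_zero, ite_mul, zero_mul,
      mul_ite, mul_zero]
    rw [Finset.sum_comm]
    rcases eq_or_ne k k' with h | h
    · subst h
      conv_rhs => rw [Finset.sum_comm]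
      simp only [Finset.sum_ite_eq', Finset.mem_univ, if_true, if_pos rfl]
      have hterm : ∀ c, star (χ k * 2⁻¹ * T c b) * (χ k * 2⁻¹ * T c b')
          = 2⁻¹ * 2⁻¹ * (star (T c b) * T c b') := by
        intro c
        simp only [star_mul', show star ((2:ℂ)⁻¹) = (2⁻¹:ℂ) by
          simp [Complex.star_def, map_inv₀, Complex.conj_ofNat]]
        linear_combination (2⁻¹ * star (T c b) * 2⁻¹ * T c b') * hchi k
      simp_rw [hterm]
      rw [← Finset.mul_sum, ← hRR, Finset.mul_sum]
      refine Finset.sum_congr rfl fun c _ => by ring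
    · conv_rhs => rw [Finset.sum_comm]
      simp [Finset.sum_ite_eq', h, Ne.symm h]
  have hDt := Matrix.posSemidef_conjTranspose_mul_self D
  have hsqrt : S = hDt.sqrt := hS.eq_sqrt_of_sq_eq hDt hsq
  have htr : S.trace = R.trace := by
    simp only [Matrix.trace, Matrix.diag, hSdef, Matrix.of_apply, Fintype.sum_prod_type,
      if_pos rfl, Fin.sum_univ_two, ← Finset.mul_sum]
    norm_num
    ring
  rw [traceNorm, traceNorm, ← hsqrt, htr]

lemma ptrace_entry {n dE : ℕ} {d : Fin n → ℕ}
    (ρAE : Matrix ((∀ i, Fin (d i)) × Fin dE) ((∀ i, Fin (d i)) × Fin dE) ℂ)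
    (B : ∀ i, Matrix (Fin (d i)) (Fin (d i)) ℂ) (b b' : Fin dE) :
    ptraceLeft (ρAE * Matrix.of fun p q : (∀ i, Fin (d i)) × Fin dE =>
        (∏ i, B i (p.1 i) (q.1 i)) * (if p.2 = q.2 then 1 else 0)) b b'
      = ∑ x, ∑ y, ρAE (x, b) (y, b') * ∏ i, B i (y i) (x i) := by
  simp only [ptraceLeft, Matrix.of_apply, Matrix.mul_apply, Fintype.sum_prod_type,
    mul_ite, mul_one, mul_zero, Finset.sum_ite_eq', Finset.mem_univ, if_true]

/-- The extractor error of the XOR (parity) function equals the trace norm of the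
correlator term `tr_A (ρ_{AE} ∏ᵢ Cᵢ)`. -/
theorem xor_extractor_error_eq_correlator_traceNorm {n dE : ℕ} {d : Fin n → ℕ}
    (A : ∀ i, Fin 2 → Matrix (Fin (d i)) (Fin (d i)) ℂ)
    (hproj : ∀ i a, (A i a).IsHermitian ∧ A i a * A i a = A i a)
    (hsum : ∀ i, A i 0 + A i 1 = 1)
    (ρAE : Matrix ((∀ i, Fin (d i)) × Fin dE) ((∀ i, Fin (d i)) × Fin dE) ℂ)
    (hρ : ρAE.PosSemidef) (htr : ρAE.trace = 1) :
    let C : ∀ i, Matrix (Fin (d i)) (Fin (d i)) ℂ := fun i => A i 0 - A i 1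
    let g : (Fin n → Fin 2) → Fin 2 := fun a => ∑ i, a i
    let MA : (Fin n → Fin 2) → Matrix (Fin dE) (Fin dE) ℂ := fun a =>
      ptraceLeft (ρAE * Matrix.of fun p q : (∀ i, Fin (d i)) × Fin dE =>
        (∏ i, A i (a i) (p.1 i) (q.1 i)) * (if p.2 = q.2 then 1 else 0))
    let ρKE : Matrix (Fin 2 × Fin dE) (Fin 2 × Fin dE) ℂ :=
      Matrix.of fun p q => ∑ a : Fin n → Fin 2,
        (if p.1 = q.1 ∧ g a = p.1 then 1 else 0) * MA a p.2 q.2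
    let ρE : Matrix (Fin dE) (Fin dE) ℂ := ptraceLeft ρAE
    let uKρE : Matrix (Fin 2 × Fin dE) (Fin 2 × Fin dE) ℂ :=
      Matrix.of fun p q => (if p.1 = q.1 then (2 : ℂ)⁻¹ else 0) * ρE p.2 q.2
    traceNorm (ρKE - uKρE) =
      traceNorm (ptraceLeft (ρAE * Matrix.of fun p q : (∀ i, Fin (d i)) × Fin dE =>
        (∏ i, C i (p.1 i) (q.1 i)) * (if p.2 = q.2 then 1 else 0))) := by
  intro C g MA ρKE ρE uKρE
  refine traceNorm_double _ _ fun p q => ?_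
  obtain ⟨k, b⟩ := p
  obtain ⟨k', b'⟩ := q
  simp only [Matrix.sub_apply, ρKE, uKρE, Matrix.of_apply]
  rcases eq_or_ne k k' with h | h
  · subst h
    simp only [if_pos rfl, true_and]
    have hMA : ∀ a : Fin n → Fin 2, MA a b b'
        = ∑ x, ∑ y, ρAE (x, b) (y, b') * ∏ i, A i (a i) (y i) (x i) :=
      fun a => ptrace_entry ρAE (fun i => A i (a i)) b b'
    have hT : ptraceLeft (ρAE * Matrix.of fun p q : (∀ i, Fin (d i)) × Fin dE =>
          (∏ i, C i (p.1 i) (q.1 i)) * (if p.2 = q.2 then 1 else 0)) b b'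
        = ∑ x, ∑ y, ρAE (x, b) (y, b')
            * ∏ i, (A i 0 (y i) (x i) - A i 1 (y i) (x i)) := by
      rw [ptrace_entry]
      simp only [C, Matrix.sub_apply]
    have hone : ∀ x y : (∀ i, Fin (d i)),
        (∏ i, (A i 0 (y i) (x i) + A i 1 (y i) (x i))) = if y = x then (1:ℂ) else 0 := by
      intro x y
      have h1 : ∀ i, A i 0 (y i) (x i) + A i 1 (y i) (x i)
          = if y i = x i then (1:ℂ) else 0 := by
        intro i; rw [← Matrix.add_apply, hsum i, Matrix.one_apply]
      simp_rw [h1]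
      rw [Fintype.prod_boole]
      by_cases hxy : y = x
      · simp [hxy]
      · rw [if_neg (by simpa [funext_iff] using hxy), if_neg hxy]
    have hρE : ρE b b' = ∑ x, ρAE (x, b) (x, b') := rfl
    have step1 : ∑ a : Fin n → Fin 2, (if g a = k then (1:ℂ) else 0) * MA a b b'
        = ∑ x, ∑ y, ρAE (x, b) (y, b') *
            (∑ a : Fin n → Fin 2, (if (∑ i, a i) = k then (1:ℂ) else 0)
              * ∏ i, A i (a i) (y i) (x i)) := by
      simp_rw [hMA, Finset.mul_sum]
      rw [Finset.sum_comm]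
      refine Finset.sum_congr rfl fun x _ => ?_
      rw [Finset.sum_comm]
      exact Finset.sum_congr rfl fun y _ => Finset.sum_congr rfl fun a _ =>
        mul_left_comm _ _ _
    rw [step1]
    have step2 : ∀ x y : (∀ i, Fin (d i)),
        (∑ a : Fin n → Fin 2, (if (∑ i, a i) = k then (1:ℂ) else 0)
            * ∏ i, A i (a i) (y i) (x i))
          = 2⁻¹ * ∏ i, (A i 0 (y i) (x i) + A i 1 (y i) (x i))
            + χ k * 2⁻¹ * ∏ i, (A i 0 (y i) (x i) - A i 1 (y i) (x i)) :=
      fun x y => key_sum k (fun i j => A i j (y i) (x i))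
    simp_rw [step2]
    have expand : ∑ x, ∑ y, ρAE (x, b) (y, b') *
          (2⁻¹ * ∏ i, (A i 0 (y i) (x i) + A i 1 (y i) (x i))
            + χ k * 2⁻¹ * ∏ i, (A i 0 (y i) (x i) - A i 1 (y i) (x i)))
        = 2⁻¹ * ρE b b'
          + χ k * 2⁻¹ * ∑ x, ∑ y, ρAE (x, b) (y, b')
              * ∏ i, (A i 0 (y i) (x i) - A i 1 (y i) (x i)) := by
      simp_rw [hone, mul_add, Finset.sum_add_distrib]
      congr 1
      · simp only [mul_ite, mul_one, mul_zero, Finset.sum_ite_eq', Finset.mem_univ, if_true,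
          hρE, Finset.mul_sum]
        exact Finset.sum_congr rfl fun x _ => by ring
      · simp_rw [Finset.mul_sum]
        exact Finset.sum_congr rfl fun x _ => Finset.sum_congr rfl fun y _ => by ring
    rw [expand, hT]
    simp only [if_true]
    ring
  · simp [h]
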